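/- Let I be a school matching instance, F⊆S(I) nonempty, and f:F→ℝ. If the problem Π(f,F) is minimum cut representable, then the set of minimizers {M∈F : f(M) ≤ f(M') for all M'∈F} is a (nonempty) sublattice of the lattice of stable matchings (S(I),≥), i.e., it is closed under the meet ∧ and join ∨ of (S(I),≥). -/

import Mathlib

open Classical
open scoped ENNReal

noncomputable section

namespace SM

/-- A school matching instance: students `A`, schools `B`, strict preference
orders over the other side plus the outside option `∅` (encoded as `none`),
and quotas `q b ≤ |A|`. -/
structure SchoolInstance (A B : Type) [Fintype A] [Fintype B] where
  prefA : A → Option B → Option B → Prop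
  prefB : B → Option A → Option A → Prop
  prefA_sto : ∀ a, IsStrictTotalOrder (Option B) (prefA a)
  prefB_sto : ∀ b, IsStrictTotalOrder (Option A) (prefB b)
  q : B → ℕ
  q_le : ∀ b, q b ≤ Fintype.card A

variable {A B : Type} [Fintype A] [Fintype B] [DecidableEq A] [DecidableEq B]

/-- A matching: every student is assigned a school or the outside option, and
each school receives at most `q b` students.  (A school is implicitly paired
with the outside option exactly when it has strictly fewer than `q b`
students, and a student is paired with the outside option exactly when it has
no school; this determines the set of pairs of the matching.) -/
structure Matching {A B : Type} [Fintype A] [Fintype B] (I : SchoolInstance A B) where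
  toFun : A → Option B
  quota : ∀ b : B, (Finset.univ.filter fun a => toFun a = some b).card ≤ I.q b

instance (I : SchoolInstance A B) : Nonempty (Matching I) := by
  refine ⟨⟨fun _ => none, fun b => ?_⟩⟩
  have h : (Finset.univ.filter fun _ : A => (none : Option B) = some b) = ∅ :=
    Finset.filter_false_of_mem (by intro a _; simp)
  rw [h, Finset.card_empty]
  exact Nat.zero_le _

/-- The students assigned to school `b`. -/
def assignedTo (I : SchoolInstance A B) (M : Matching I) (b : B) : Finset A :=
  Finset.univ.filter fun a => M.toFun a = some b

/-- School `b` has strictly fewer than `q b` students, i.e. is also paired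
with the outside option. -/
def hasSlack (I : SchoolInstance A B) (M : Matching I) (b : B) : Prop :=
  (assignedTo I M b).card < I.q b

/-- `x ∈ M(b)`: the partners of school `b` (students assigned to it, plus the
outside option when it is under quota). -/
def inPartners (I : SchoolInstance A B) (M : Matching I) (b : B) (x : Option A) : Prop :=
  (∃ a : A, x = some a ∧ M.toFun a = some b) ∨ (x = none ∧ hasSlack I M b)

/-- `M(b)` as a set. -/
def partnersSet (I : SchoolInstance A B) (M : Matching I) (b : B) : Set (Option A) :=
  {x | inPartners I M b x}

/-- The pair `ab` blocks `M`. -/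
def BlocksPair (I : SchoolInstance A B) (M : Matching I) (a : A) (b : B) : Prop :=
  I.prefA a (some b) (M.toFun a) ∧ ∃ x, inPartners I M b x ∧ I.prefB b (some a) x

/-- Student `a` blocks `M` (prefers the outside option to its partner). -/
def BlocksStudent (I : SchoolInstance A B) (M : Matching I) (a : A) : Prop :=
  I.prefA a none (M.toFun a)

/-- School `b` blocks `M` (prefers the outside option to one of its partners). -/
def BlocksSchool (I : SchoolInstance A B) (M : Matching I) (b : B) : Prop :=
  ∃ a : A, M.toFun a = some b ∧ I.prefB b none (some a)

/-- Stability: no blocking pair and no blocking agent. -/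
def Stable (I : SchoolInstance A B) (M : Matching I) : Prop :=
  (¬ ∃ a b, BlocksPair I M a b) ∧ (¬ ∃ a, BlocksStudent I M a) ∧ (¬ ∃ b, BlocksSchool I M b)

/-- `M ≥ M'`: every student weakly prefers `M` to `M'`. -/
def matGE (I : SchoolInstance A B) (M M' : Matching I) : Prop :=
  ∀ a : A, M.toFun a = M'.toFun a ∨ I.prefA a (M.toFun a) (M'.toFun a)

/-- `M' < M` in the student order. -/
def matLT (I : SchoolInstance A B) (M' M : Matching I) : Prop :=
  matGE I M M' ∧ M'.toFun ≠ M.toFun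

/-- `M'` is an immediate predecessor of `M` in `(S(I), ≥)`. -/
def ImmPred (I : SchoolInstance A B) (M' M : Matching I) : Prop :=
  Stable I M' ∧ Stable I M ∧ matLT I M' M ∧
    ¬ ∃ M'' : Matching I, Stable I M'' ∧ matLT I M' M'' ∧ matLT I M'' M

/-- The type in which rotations live: pairs `(ρ₊, ρ₋)` of sets of
student/school pairs (with the outside option allowed on either side). -/
abbrev Rot (A B : Type) : Type :=
  Finset (Option A × Option B) × Finset (Option A × Option B)

/-- The set of pairs of a matching: each student with its partner, and each
under-quota school with the outside option. -/
def pairsOf (I : SchoolInstance A B) (M : Matching I) : Finset (Option A × Option B) :=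
  Finset.univ.filter fun p =>
    (∃ a : A, p = (some a, M.toFun a)) ∨ (∃ b : B, hasSlack I M b ∧ p = (none, some b))

/-- The rotation `ρ(M, M') = (M ∖ M', M' ∖ M)`. -/
def rho (I : SchoolInstance A B) (M M' : Matching I) : Rot A B :=
  (pairsOf I M \ pairsOf I M', pairsOf I M' \ pairsOf I M)

/-- `R(I)`: the set of all rotations of `I`. -/
def RotSet (I : SchoolInstance A B) : Set (Rot A B) :=
  {r | ∃ M M' : Matching I, ImmPred I M' M ∧ r = rho I M M'}

/-- `c` is a maximal chain of stable matchings from `M0` down to `M`: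
consecutive entries are immediate predecessors. -/
def chainTo (I : SchoolInstance A B) (M0 M : Matching I) (c : List (Matching I)) : Prop :=
  c.head? = some M0 ∧ c.getLast? = some M ∧ (∀ N ∈ c, Stable I N) ∧
    List.Chain' (fun X Y => ImmPred I Y X) c

/-- The set of rotations eliminated along the chain `c`. -/
def chainRots (I : SchoolInstance A B) (c : List (Matching I)) : Set (Rot A B) :=
  {r | ∃ (i : ℕ) (X Y : Matching I), GetElem?.getElem? c i = some X ∧ GetElem?.getElem? c (i + 1) = some Y ∧ r = rho I X Y}

/-- `ρ` is exposed in `M`. -/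
def Exposed (I : SchoolInstance A B) (r : Rot A B) (M : Matching I) : Prop :=
  ∃ M', ImmPred I M' M ∧ r = rho I M M'

/-- The rotation poset `ρ ⊵ ρ'` (relative to the rotation-set map `RM`):
either `ρ = ρ'`, or `ρ ∈ R_M` for every stable `M` in which `ρ'` is exposed. -/
def domRel (I : SchoolInstance A B) (RM : Matching I → Set (Rot A B)) (r r' : Rot A B) : Prop :=
  r = r' ∨ ∀ M, Stable I M → Exposed I r' M → r ∈ RM M

/-- `ρ ▷ ρ'`. -/
def strictDom (I : SchoolInstance A B) (RM : Matching I → Set (Rot A B)) (r r' : Rot A B) : Prop :=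
  domRel I RM r r' ∧ r ≠ r'

/-- `R ⊆ R(I)` is upper-closed in the rotation poset. -/
def UpperClosed (I : SchoolInstance A B) (RM : Matching I → Set (Rot A B))
    (R : Set (Rot A B)) : Prop :=
  R ⊆ RotSet I ∧ ∀ r' ∈ R, ∀ r ∈ RotSet I, domRel I RM r r' → r ∈ R

/-- `N` is the join `M ∨ M'` (least upper bound) in `(S(I), ≥)`. -/
def IsJoin (I : SchoolInstance A B) (M M' N : Matching I) : Prop :=
  Stable I N ∧ matGE I N M ∧ matGE I N M' ∧
    ∀ P, Stable I P → matGE I P M → matGE I P M' → matGE I P N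

/-- `N` is the meet `M ∧ M'` (greatest lower bound) in `(S(I), ≥)`. -/
def IsMeet (I : SchoolInstance A B) (M M' N : Matching I) : Prop :=
  Stable I N ∧ matGE I M N ∧ matGE I M' N ∧
    ∀ P, Stable I P → matGE I M P → matGE I M' P → matGE I N P

/-- `F` is a (nonempty) sublattice of the lattice of stable matchings. -/
def IsSublattice (I : SchoolInstance A B) (F : Set (Matching I)) : Prop :=
  F.Nonempty ∧ (∀ M ∈ F, Stable I M) ∧
    (∀ M ∈ F, ∀ M' ∈ F, ∃ N ∈ F, IsJoin I M M' N) ∧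
    (∀ M ∈ F, ∀ M' ∈ F, ∃ N ∈ F, IsMeet I M M' N)

/-- `ρ ~ ρ'`: the two rotations are eliminated together in every matching of `F`. -/
def rotEquiv (I : SchoolInstance A B) (RM : Matching I → Set (Rot A B))
    (F : Set (Matching I)) (r r' : Rot A B) : Prop :=
  ∀ M ∈ F, (r ∈ RM M ↔ r' ∈ RM M)

/-- The trivial meta-rotation `θ₀^F` of rotations eliminated in every matching of `F`. -/
def theta0 (I : SchoolInstance A B) (RM : Matching I → Set (Rot A B))
    (F : Set (Matching I)) : Set (Rot A B) :=
  {r | r ∈ RotSet I ∧ ∀ M ∈ F, r ∈ RM M}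

/-- The trivial meta-rotation `θ_z^F` of rotations eliminated in no matching of `F`. -/
def thetaZ (I : SchoolInstance A B) (RM : Matching I → Set (Rot A B))
    (F : Set (Matching I)) : Set (Rot A B) :=
  {r | r ∈ RotSet I ∧ ∀ M ∈ F, r ∉ RM M}

/-- `θ` is a meta-rotation of `F` (an equivalence class of `~`). -/
def IsMetaRot (I : SchoolInstance A B) (RM : Matching I → Set (Rot A B))
    (F : Set (Matching I)) (θ : Set (Rot A B)) : Prop :=
  ∃ r ∈ RotSet I, θ = {r' | r' ∈ RotSet I ∧ rotEquiv I RM F r r'}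

/-- `θ` is a proper meta-rotation of `F`. -/
def IsProperMeta (I : SchoolInstance A B) (RM : Matching I → Set (Rot A B))
    (F : Set (Matching I)) (θ : Set (Rot A B)) : Prop :=
  IsMetaRot I RM F θ ∧ θ ≠ theta0 I RM F ∧ θ ≠ thetaZ I RM F

/-- `θ ⊵^F θ'` on (proper) meta-rotations. -/
def metaDom (I : SchoolInstance A B) (RM : Matching I → Set (Rot A B))
    (F : Set (Matching I)) (θ θ' : Set (Rot A B)) : Prop :=
  ∀ M ∈ F, θ' ⊆ RM M → θ ⊆ RM M

/-- `Θ_M`: the set of proper meta-rotations contained in `R_M`. -/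
def ThetaM (I : SchoolInstance A B) (RM : Matching I → Set (Rot A B))
    (F : Set (Matching I)) (M : Matching I) : Set (Set (Rot A B)) :=
  {θ | IsProperMeta I RM F θ ∧ θ ⊆ RM M}

/-- `Θ` is an upper-closed set of proper meta-rotations. -/
def UCProper (I : SchoolInstance A B) (RM : Matching I → Set (Rot A B))
    (F : Set (Matching I)) (Θ : Set (Set (Rot A B))) : Prop :=
  (∀ θ ∈ Θ, IsProperMeta I RM F θ) ∧
    ∀ θ' ∈ Θ, ∀ θ, IsProperMeta I RM F θ → metaDom I RM F θ θ' → θ ∈ Θ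

/-- `M_R`: the stable matching whose rotation set is `R` (via definite description). -/
def MofR (I : SchoolInstance A B) (RM : Matching I → Set (Rot A B))
    (R : Set (Rot A B)) : Matching I :=
  Classical.epsilon fun M => Stable I M ∧ RM M = R

/-- `R^θ = θ₀^F ∪ ⋃ {θ' proper : θ' ⊵^F θ}`. -/
def Rup (I : SchoolInstance A B) (RM : Matching I → Set (Rot A B))
    (F : Set (Matching I)) (θ : Set (Rot A B)) : Set (Rot A B) :=
  theta0 I RM F ∪ ⋃₀ {θ' | IsProperMeta I RM F θ' ∧ metaDom I RM F θ' θ}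

/-- `R_θ = θ₀^F ∪ ⋃ {θ' proper : θ' ▷^F θ}`. -/
def Rdn (I : SchoolInstance A B) (RM : Matching I → Set (Rot A B))
    (F : Set (Matching I)) (θ : Set (Rot A B)) : Set (Rot A B) :=
  theta0 I RM F ∪ ⋃₀ {θ' | IsProperMeta I RM F θ' ∧ metaDom I RM F θ' θ ∧ θ' ≠ θ}

/-- `M^θ`. -/
def Mup (I : SchoolInstance A B) (RM : Matching I → Set (Rot A B))
    (F : Set (Matching I)) (θ : Set (Rot A B)) : Matching I :=
  MofR I RM (Rup I RM F θ)

/-- `M_θ`. -/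
def Mdn (I : SchoolInstance A B) (RM : Matching I → Set (Rot A B))
    (F : Set (Matching I)) (θ : Set (Rot A B)) : Matching I :=
  MofR I RM (Rdn I RM F θ)

/-- The meet `M ∧ M'` in the lattice of stable matchings (via definite description). -/
def meetM (I : SchoolInstance A B) (M M' : Matching I) : Matching I :=
  Classical.epsilon fun N => IsMeet I M M' N

/-- First order differential `∂f_θ = f(M^θ) − f(M_θ)`. -/
def d1 (I : SchoolInstance A B) (RM : Matching I → Set (Rot A B))
    (F : Set (Matching I)) (f : Matching I → ℝ) (θ : Set (Rot A B)) : ℝ :=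
  f (Mup I RM F θ) - f (Mdn I RM F θ)

/-- Second order differential
`∂²f_{θ,θ'} = f(M^θ ∧ M_{θ'}) + f(M_θ ∧ M^{θ'}) − f(M_θ ∧ M_{θ'}) − f(M^θ ∧ M^{θ'})`. -/
def d2 (I : SchoolInstance A B) (RM : Matching I → Set (Rot A B))
    (F : Set (Matching I)) (f : Matching I → ℝ) (θ θ' : Set (Rot A B)) : ℝ :=
  f (meetM I (Mup I RM F θ) (Mdn I RM F θ')) + f (meetM I (Mdn I RM F θ) (Mup I RM F θ'))
    - f (meetM I (Mdn I RM F θ) (Mdn I RM F θ')) - f (meetM I (Mup I RM F θ) (Mup I RM F θ'))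

/-- The greatest element `M₀^F` of `F` (via definite description). -/
def topF (I : SchoolInstance A B) (F : Set (Matching I)) : Matching I :=
  Classical.epsilon fun N => N ∈ F ∧ ∀ P ∈ F, matGE I N P

/-- Vertices of the digraph: all rotations, plus a source `s` and sink `t`. -/
abbrev Vtx (A B : Type) : Type := Rot A B ⊕ Bool

/-- The source `s`. -/
def srcV : Vtx A B := Sum.inr true

/-- The sink `t`. -/
def tgtV : Vtx A B := Sum.inr false

/-- The value of the cut `S` for the capacity function `u`: the total capacity
of the arcs leaving `S`. -/
def cutVal (u : Vtx A B → Vtx A B → ℝ≥0∞) (S : Set (Vtx A B)) : ℝ≥0∞ :=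
  ∑ p : Vtx A B × Vtx A B, if p.1 ∈ S ∧ p.2 ∉ S then u p.1 p.2 else 0

/-- The `s`-`t` cut `{s} ∪ R`. -/
def cutOf (R : Set (Rot A B)) : Set (Vtx A B) := insert srcV (Sum.inl '' R)

/-- `(u, C)` witnesses minimum cut representability of `Π(f, F)`: for every
`R ⊆ R(I)`, the cut `{s} ∪ R` has finite capacity iff `R` is upper-closed and
`M_R ∈ F`, and in that case its value is `f(M_R) + C`. -/
def MinCutRepWith (I : SchoolInstance A B) (RM : Matching I → Set (Rot A B))
    (F : Set (Matching I)) (f : Matching I → ℝ)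
    (u : Vtx A B → Vtx A B → ℝ≥0∞) (C : ℝ) : Prop :=
  ∀ R : Set (Rot A B), R ⊆ RotSet I →
    ((cutVal u (cutOf R) ≠ ⊤ ↔
        (UpperClosed I RM R ∧ ∃ M, Stable I M ∧ RM M = R ∧ M ∈ F)) ∧
      (∀ M, Stable I M → RM M = R → M ∈ F → (cutVal u (cutOf R)).toReal = f M + C))

/-- The problem `Π(f, F)` is minimum cut representable. -/
def MinCutRep (I : SchoolInstance A B) (RM : Matching I → Set (Rot A B))
    (F : Set (Matching I)) (f : Matching I → ℝ) : Prop :=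
  ∃ u C, MinCutRepWith I RM F f u C

/-- The cut digraph `D^{f,F}` (with representative rotations `rep` and
constant `γ`); capacities of parallel arcs are added. -/
def cutDigraph (I : SchoolInstance A B) (RM : Matching I → Set (Rot A B))
    (F : Set (Matching I)) (f : Matching I → ℝ)
    (rep : Set (Rot A B) → Rot A B) (γ : ℝ) : Vtx A B → Vtx A B → ℝ≥0∞ :=
  fun x y =>
    (if ∃ θ, IsMetaRot I RM F θ ∧ ∃ r ∈ θ, ∃ r' ∈ θ, r ≠ r' ∧ x = Sum.inl r ∧ y = Sum.inl r'
      then ⊤ else 0)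
    + (if ∃ θ θ', IsProperMeta I RM F θ ∧ IsProperMeta I RM F θ' ∧ θ ≠ θ' ∧
          metaDom I RM F θ' θ ∧ x = Sum.inl (rep θ) ∧ y = Sum.inl (rep θ')
        then ⊤ else 0)
    + (∑ θ : Set (Rot A B), ∑ θ' : Set (Rot A B),
        if IsProperMeta I RM F θ ∧ IsProperMeta I RM F θ' ∧ θ ≠ θ' ∧
            x = Sum.inl (rep θ) ∧ y = Sum.inl (rep θ')
        then ENNReal.ofReal ((1 / 2) * d2 I RM F f θ θ') else 0)
    + (if (theta0 I RM F).Nonempty ∧ x = srcV ∧ y = Sum.inl (rep (theta0 I RM F))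
        then ⊤ else 0)
    + (if (thetaZ I RM F).Nonempty ∧ x = Sum.inl (rep (thetaZ I RM F)) ∧ y = tgtV
        then ⊤ else 0)
    + (∑ θ : Set (Rot A B),
        if IsProperMeta I RM F θ ∧ x = Sum.inl (rep θ) ∧ y = tgtV
        then ENNReal.ofReal (d1 I RM F f θ -
          (1 / 2) * (∑ θ' : Set (Rot A B),
            if IsProperMeta I RM F θ' ∧ θ' ≠ θ then d2 I RM F f θ θ' else 0) + γ)
        else 0)
    + (∑ θ : Set (Rot A B),
        if IsProperMeta I RM F θ ∧ x = srcV ∧ y = Sum.inl (rep θ)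
        then ENNReal.ofReal γ else 0)

/-- `b` prefers `S'` to `S''`: every member of `S'` is preferred to every
member of `S'' ∖ S'`. -/
def prefersSet (I : SchoolInstance A B) (b : B) (S' S'' : Set (Option A)) : Prop :=
  ∀ x ∈ S', ∀ y ∈ S'', y ∉ S' → I.prefB b x y

/-- `A(ρ)`: students appearing in `ρ₊`. -/
def Aof (r : Rot A B) : Set A := {a | ∃ b : B, (some a, some b) ∈ r.1}

/-- `B(ρ)`: schools appearing in `ρ₊`. -/
def Bof (r : Rot A B) : Set B := {b | ∃ a : A, (some a, some b) ∈ r.1}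

/-- `ρ₊(b)`: students matched to `b` in `ρ₊`. -/
def rhoPlusB (r : Rot A B) (b : B) : Set A := {a | (some a, some b) ∈ r.1}

/-- `R^ρ = {ρ' : ρ' ⊵ ρ}`. -/
def RupRot (I : SchoolInstance A B) (RM : Matching I → Set (Rot A B))
    (r : Rot A B) : Set (Rot A B) :=
  {r' | r' ∈ RotSet I ∧ domRel I RM r' r}

/-- `R_ρ = {ρ' : ρ' ▷ ρ}`. -/
def RdnRot (I : SchoolInstance A B) (RM : Matching I → Set (Rot A B))
    (r : Rot A B) : Set (Rot A B) :=
  {r' | r' ∈ RotSet I ∧ strictDom I RM r' r}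

/-- `M^ρ`. -/
def MupRot (I : SchoolInstance A B) (RM : Matching I → Set (Rot A B))
    (r : Rot A B) : Matching I :=
  MofR I RM (RupRot I RM r)

/-- `M_ρ`. -/
def MdnRot (I : SchoolInstance A B) (RM : Matching I → Set (Rot A B))
    (r : Rot A B) : Matching I :=
  MofR I RM (RdnRot I RM r)

/-- First order differential of `f` at a rotation: `∂f_ρ = f(M^ρ) − f(M_ρ)`. -/
def d1Rot (I : SchoolInstance A B) (RM : Matching I → Set (Rot A B))
    (f : Matching I → ℝ) (r : Rot A B) : ℝ :=
  f (MupRot I RM r) - f (MdnRot I RM r)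

/-- Second order differential of `f` at a pair of distinct rotations. -/
def d2Rot (I : SchoolInstance A B) (RM : Matching I → Set (Rot A B))
    (f : Matching I → ℝ) (r r' : Rot A B) : ℝ :=
  f (meetM I (MupRot I RM r) (MdnRot I RM r')) + f (meetM I (MdnRot I RM r) (MupRot I RM r'))
    - f (meetM I (MdnRot I RM r) (MdnRot I RM r'))
    - f (meetM I (MupRot I RM r) (MupRot I RM r'))

/-- The pair `(ρ_in, ρ_out)` characterizes the stable matchings assigning both
siblings `a, ā` to school `b`. -/
def siblingChar (I : SchoolInstance A B) (RM : Matching I → Set (Rot A B))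
    (a abar : A) (b : B) (p : Rot A B × Rot A B) : Prop :=
  ∀ M : Matching I, Stable I M →
    ((M.toFun a = some b ∧ M.toFun abar = some b) ↔ (p.1 ∈ RM M ∧ p.2 ∉ RM M))

/-- Some stable matching assigns both `a` and `ā` to `b`. -/
def goodSchool (I : SchoolInstance A B) (a abar : A) (b : B) : Prop :=
  ∃ M, Stable I M ∧ M.toFun a = some b ∧ M.toFun abar = some b

/-- The pair `(ρ_in(a,ā,b), ρ_out(a,ā,b))` (via definite description). -/
def siblingPair (I : SchoolInstance A B) (RM : Matching I → Set (Rot A B))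
    (a abar : A) (b : B) : Rot A B × Rot A B :=
  Classical.epsilon fun p => p.1 ∈ RotSet I ∧ p.2 ∈ RotSet I ∧
    siblingChar I RM a abar b p ∧ strictDom I RM p.1 p.2

/-- `R_in(a, ā)`. -/
def Rin (I : SchoolInstance A B) (RM : Matching I → Set (Rot A B))
    (a abar : A) : Set (Rot A B) :=
  {r | ∃ b, goodSchool I a abar b ∧ r = (siblingPair I RM a abar b).1}

/-- `R_out(a, ā)`. -/
def Rout (I : SchoolInstance A B) (RM : Matching I → Set (Rot A B))
    (a abar : A) : Set (Rot A B) :=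
  {r | ∃ b, goodSchool I a abar b ∧ r = (siblingPair I RM a abar b).2}

/-- The indicator function: `0` when the siblings are matched to the same
school, `1` otherwise. -/
def sibIndicator (I : SchoolInstance A B) (a abar : A) : Matching I → ℝ :=
  fun M => if M.toFun a = M.toFun abar then 0 else 1

end SM

namespace SM

variable {A B : Type} [Fintype A] [Fintype B] [DecidableEq A] [DecidableEq B]

set_option linter.unusedSectionVars false
set_option linter.unusedVariables false
set_option maxHeartbeats 1000000

section Aux

variable {I : SchoolInstance A B}

lemma Matching.ext' {X Y : Matching I} (h : X.toFun = Y.toFun) : X = Y := by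
  cases X; cases Y; simp_all

instance : Finite (Matching I) :=
  Finite.of_injective (fun M : Matching I => M.toFun) (fun _ _ h => Matching.ext' h)

lemma matGE_refl (M : Matching I) : matGE I M M := fun _ => Or.inl rfl

lemma matGE_trans {X Y Z : Matching I} (h1 : matGE I X Y) (h2 : matGE I Y Z) :
    matGE I X Z := by
  intro a
  rcases h1 a with h | h <;> rcases h2 a with h' | h'
  · exact Or.inl (h.trans h')
  · exact Or.inr (h ▸ h')
  · exact Or.inr (h' ▸ h)
  · exact Or.inr ((I.prefA_sto a).trans _ _ _ h h')

lemma matGE_antisymm {X Y : Matching I} (h1 : matGE I X Y) (h2 : matGE I Y X) :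
    X.toFun = Y.toFun := by
  funext a
  rcases h1 a with h | h
  · exact h
  rcases h2 a with h' | h'
  · exact h'.symm
  · exact absurd ((I.prefA_sto a).trans _ _ _ h h') ((I.prefA_sto a).irrefl _)

/-- Every nonempty set of matchings has a maximal element w.r.t. `matGE`. -/
lemma exists_maximal_in :
    ∀ (n : ℕ) (S : Set (Matching I)), S.ncard ≤ n → S.Nonempty →
      ∃ Z ∈ S, ∀ W ∈ S, matGE I W Z → W.toFun = Z.toFun := by
  intro n
  induction n with
  | zero =>
    intro S hn hS
    exact absurd hn (by simpa using (Set.ncard_pos (Set.toFinite S)).mpr hS |>.ne')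
  | succ n ih =>
    intro S hn hS
    obtain ⟨z, hz⟩ := hS
    by_cases hT : ∃ v ∈ S, matGE I v z ∧ v.toFun ≠ z.toFun
    · set T := {v ∈ S | matGE I v z ∧ v.toFun ≠ z.toFun} with hTdef
      obtain ⟨v0, hv0S, hv0a, hv0b⟩ := hT
      have hTne : T.Nonempty := ⟨v0, hv0S, hv0a, hv0b⟩
      have hTss : T ⊂ S := by
        constructor
        · intro v hv; exact hv.1
        · intro hsub
          exact (hsub hz).2.2 rfl
      have hcard : T.ncard ≤ n :=
        Nat.lt_succ_iff.mp (lt_of_lt_of_le (Set.ncard_lt_ncard hTss (Set.toFinite S)) hn)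
      obtain ⟨Z, hZT, hZmax⟩ := ih T hcard hTne
      refine ⟨Z, hZT.1, ?_⟩
      intro W hW hWZ
      by_cases hWz : W.toFun = Z.toFun
      · exact hWz
      · have hWz' : W.toFun ≠ z.toFun := by
          intro he
          have hWeq : W = z := Matching.ext' he
          subst hWeq
          exact hZT.2.2 (matGE_antisymm hZT.2.1 hWZ)
        have hWT : W ∈ T := ⟨hW, matGE_trans hWZ hZT.2.1, hWz'⟩
        exact hZmax W hWT hWZ
    · push_neg at hT
      exact ⟨z, hz, fun W hW hWz => hT W hW hWz⟩

/-- Between any two comparable stable matchings there is a maximal chain. -/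
lemma exists_chain_down (M : Matching I) (hM : Stable I M) :
    ∀ (n : ℕ) (X : Matching I),
      ({P | Stable I P ∧ matGE I X P ∧ matGE I P M}).ncard ≤ n →
      Stable I X → matGE I X M →
      ∃ c : List (Matching I), c.head? = some X ∧ c.getLast? = some M ∧
        (∀ N ∈ c, Stable I N) ∧ List.Chain' (fun P Q => ImmPred I Q P) c := by
  intro n
  induction n with
  | zero =>
    intro X hn hX hXM
    have : M ∈ {P | Stable I P ∧ matGE I X P ∧ matGE I P M} := ⟨hM, hXM, matGE_refl M⟩
    exact absurd hn
      (by simpa using (Set.ncard_pos (Set.toFinite _)).mpr ⟨M, this⟩ |>.ne')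
  | succ n ih =>
    intro X hn hX hXM
    by_cases hXeq : X = M
    · subst hXeq
      exact ⟨[X], rfl, rfl, by simpa using hX, List.isChain_singleton X⟩
    · set S0 := {P | Stable I P ∧ matGE I X P ∧ P.toFun ≠ X.toFun ∧ matGE I P M} with hS0def
      have hS0ne : S0.Nonempty := by
        refine ⟨M, hM, hXM, ?_, matGE_refl M⟩
        intro h
        exact hXeq (Matching.ext' h.symm)
      obtain ⟨Z, hZS0, hZmax⟩ := exists_maximal_in S0.ncard S0 le_rfl hS0ne
      obtain ⟨hZst, hXZ, hZne, hZM⟩ := hZS0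
      have hImm : ImmPred I Z X := by
        refine ⟨hZst, hX, ⟨hXZ, hZne⟩, ?_⟩
        rintro ⟨W, hWst, ⟨hWZ, hZW⟩, ⟨hXW, hWX⟩⟩
        have hWS0 : W ∈ S0 := ⟨hWst, hXW, hWX, matGE_trans hWZ hZM⟩
        exact hZW (hZmax W hWS0 hWZ).symm
      -- the measure decreases
      have hss : {P | Stable I P ∧ matGE I Z P ∧ matGE I P M}
          ⊂ {P | Stable I P ∧ matGE I X P ∧ matGE I P M} := by
        constructor
        · rintro P ⟨h1, h2, h3⟩
          exact ⟨h1, matGE_trans hXZ h2, h3⟩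
        · intro hsub
          have hXmem : X ∈ {P | Stable I P ∧ matGE I X P ∧ matGE I P M} :=
            ⟨hX, matGE_refl X, hXM⟩
          have := hsub hXmem
          exact hZne (matGE_antisymm this.2.1 hXZ)
      have hcard : ({P | Stable I P ∧ matGE I Z P ∧ matGE I P M}).ncard ≤ n :=
        Nat.lt_succ_iff.mp (lt_of_lt_of_le (Set.ncard_lt_ncard hss (Set.toFinite _)) hn)
      obtain ⟨c, hch, hcl, hcs, hcc⟩ := ih Z hcard hZst hZM
      refine ⟨X :: c, rfl, ?_, ?_, ?_⟩
      · cases c with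
        | nil => simp at hch
        | cons y t => rw [List.getLast?_cons_cons]; exact hcl
      · intro N hN
        rcases List.mem_cons.mp hN with rfl | h
        · exact hX
        · exact hcs N h
      · rw [List.Chain', List.isChain_cons]
        refine ⟨?_, hcc⟩
        intro y hy
        cases c with
        | nil => simp at hy
        | cons z' t =>
          have h5 : z' = y := by simpa using hy
          have hz' : z' = Z := by simpa using hch
          rw [← h5, hz']
          exact hImm

/-- There is a chain from `M0` to any stable matching. -/
lemma exists_chainTo (hM0 : Stable I M0 ∧ ∀ N, Stable I N → matGE I M0 N)
    {M : Matching I} (hM : Stable I M) : ∃ c, chainTo I M0 M c := by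
  obtain ⟨c, h1, h2, h3, h4⟩ :=
    exists_chain_down M hM _ M0 le_rfl hM0.1 (hM0.2 M hM)
  exact ⟨c, h1, h2, h3, h4⟩

lemma chain'_rel_of_get {c : List (Matching I)}
    (hc : List.Chain' (fun P Q => ImmPred I Q P) c) {i : ℕ} {X Y : Matching I}
    (h1 : GetElem?.getElem? c i = some X) (h2 : GetElem?.getElem? c (i + 1) = some Y) : ImmPred I Y X := by
  obtain ⟨hi2, hg2⟩ := List.getElem?_eq_some_iff.mp h2
  have hi1 : i < c.length := by omega
  have h := List.isChain_iff_getElem.mp hc i (by omega)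
  have e1 : X = c.get ⟨i, hi1⟩ := by
    rw [List.getElem?_eq_getElem hi1] at h1
    exact (Option.some_inj.mp h1).symm
  have e2 : Y = c.get ⟨i + 1, hi2⟩ := by
    rw [List.getElem?_eq_getElem hi2] at h2
    exact (Option.some_inj.mp h2).symm
  rw [e1, e2]
  exact h

lemma mem_pairsOf_some {M : Matching I} {a : A} {x : Option B} :
    (some a, x) ∈ pairsOf I M ↔ x = M.toFun a := by
  unfold pairsOf
  simp only [Finset.mem_filter, Finset.mem_univ, true_and]
  constructor
  · rintro (⟨a', h⟩ | ⟨b, _, h⟩)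
    · have h1 : (some a : Option A) = some a' := congrArg Prod.fst h
      have h2 : x = M.toFun a' := congrArg Prod.snd h
      rw [h2, ← Option.some.injEq a a' |>.mp h1]
    · exact absurd (congrArg Prod.fst h) (by simp)
  · intro h
    exact Or.inl ⟨a, by rw [h]⟩

lemma mem_rho_snd {X Y : Matching I} {a : A} {x : Option B} :
    (some a, x) ∈ (rho I X Y).2 ↔ x = Y.toFun a ∧ x ≠ X.toFun a := by
  unfold rho
  rw [Finset.mem_sdiff, mem_pairsOf_some, mem_pairsOf_some]

/-- Along any list, the last value at a student either equals the head value
or is witnessed by a consecutive pair at which it changes to its final value. -/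
lemma last_change :
    ∀ (c : List (Matching I)) (H L : Matching I), c.head? = some H →
      c.getLast? = some L → ∀ a : A,
      L.toFun a = H.toFun a ∨ ∃ i X Y, GetElem?.getElem? c i = some X ∧ GetElem?.getElem? c (i + 1) = some Y ∧
        Y.toFun a = L.toFun a ∧ X.toFun a ≠ L.toFun a := by
  intro c
  induction c with
  | nil => intro H L h; simp at h
  | cons x t ih =>
    intro H L hH hL a
    have hx : H = x := by simpa using hH.symm
    subst hx
    cases t with
    | nil =>
      left
      have : L = H := by simpa using hL.symm
      rw [this]
    | cons y t' =>
      have hL' : (y :: t').getLast? = some L := by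
        rwa [List.getLast?_cons_cons] at hL
      rcases ih y L rfl hL' a with h | ⟨i, X, Y, h1, h2, h3, h4⟩
      · by_cases hxy : y.toFun a = H.toFun a
        · exact Or.inl (h.trans hxy)
        · refine Or.inr ⟨0, H, y, rfl, rfl, h.symm, ?_⟩
          intro he
          exact hxy (h ▸ he.symm)
      · exact Or.inr ⟨i + 1, X, Y, h1, h2, h3, h4⟩

/-- Every element of a descending chain is `≥` the last element. -/
lemma chain_ge_last :
    ∀ (c : List (Matching I)), List.Chain' (fun P Q => ImmPred I Q P) c →
      ∀ (L : Matching I), c.getLast? = some L → ∀ X ∈ c, matGE I X L := by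
  intro c
  induction c with
  | nil => intro _ L hL; simp at hL
  | cons x t ih =>
    intro hc L hL X hX
    cases t with
    | nil =>
      have h1 : x = L := by simpa using hL
      have h2 : X = x := by simpa using hX
      rw [h2, ← h1]; exact matGE_refl x
    | cons y t' =>
      have hrel : ImmPred I y x := (List.isChain_cons_cons.mp hc).1
      have hc' := (List.isChain_cons_cons.mp hc).2
      have hL' : (y :: t').getLast? = some L := by
        rwa [List.getLast?_cons_cons] at hL
      rcases List.mem_cons.mp hX with rfl | hX'
      · exact matGE_trans hrel.2.2.1.1 (ih hc' L hL' y List.mem_cons_self)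
      · exact ih hc' L hL' X hX'

/-- Comparison lemma: inclusion of rotation sets gives comparability. -/
lemma matGE_of_RM_subset {M0 : Matching I}
    (hM0 : Stable I M0 ∧ ∀ N, Stable I N → matGE I M0 N)
    {RM : Matching I → Set (Rot A B)}
    (hRM : ∀ M c, Stable I M → chainTo I M0 M c → RM M = chainRots I c)
    {X Y : Matching I} (hX : Stable I X) (hY : Stable I Y)
    (hsub : RM X ⊆ RM Y) : matGE I X Y := by
  obtain ⟨cX, hcX⟩ := exists_chainTo hM0 hX
  obtain ⟨cY, hcY⟩ := exists_chainTo hM0 hY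
  intro a
  rcases last_change cX M0 X hcX.1 hcX.2.1 a with h0 | ⟨i, P, Q, h1, h2, h3, h4⟩
  · rcases hM0.2 Y hY a with h | h
    · exact Or.inl (h0.trans h)
    · exact Or.inr (h0 ▸ h)
  · have hr : rho I P Q ∈ chainRots I cX := ⟨i, P, Q, h1, h2, rfl⟩
    have hr' : rho I P Q ∈ chainRots I cY := by
      rw [← hRM Y cY hY hcY]
      exact hsub (by rw [hRM X cX hX hcX]; exact hr)
    obtain ⟨j, P', Q', g1, g2, g3⟩ := hr'
    have hmem : (some a, X.toFun a) ∈ (rho I P Q).2 :=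
      mem_rho_snd.mpr ⟨h3.symm, fun he => h4 he.symm⟩
    rw [g3] at hmem
    have hXa : X.toFun a = Q'.toFun a := (mem_rho_snd.mp hmem).1
    have hQ'Y : matGE I Q' Y :=
      chain_ge_last cY hcY.2.2.2 Y hcY.2.1 Q' (List.mem_of_getElem? g2)
    rcases hQ'Y a with h | h
    · exact Or.inl (hXa.trans h)
    · exact Or.inr (hXa ▸ h)

/-- Monotonicity: if `N ≤ M` then `R_M ⊆ R_N`. -/
lemma RM_mono {M0 : Matching I}
    (hM0 : Stable I M0 ∧ ∀ N, Stable I N → matGE I M0 N)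
    {RM : Matching I → Set (Rot A B)}
    (hRM : ∀ M c, Stable I M → chainTo I M0 M c → RM M = chainRots I c)
    {M N : Matching I} (hM : Stable I M) (hN : Stable I N)
    (hMN : matGE I M N) : RM M ⊆ RM N := by
  obtain ⟨c1, hc1⟩ := exists_chainTo hM0 hM
  obtain ⟨c2, hh, hl, hs, hcc⟩ := exists_chain_down N hN _ M le_rfl hM hMN
  cases c2 with
  | nil => simp at hh
  | cons z t =>
    have hz : z = M := by simpa using hh
    rw [hz] at hs hcc hl
    have hc1ne : c1 ≠ [] := by
      intro h; rw [h] at hc1; exact (by simpa using hc1.1)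
    have hlast1 : c1.getLast? = some M := hc1.2.1
    have hchainTo : chainTo I M0 N (c1 ++ t) := by
      refine ⟨?_, ?_, ?_, ?_⟩
      · cases c1 with
        | nil => exact absurd rfl hc1ne
        | cons w r => simpa using hc1.1
      · cases t with
        | nil =>
          have hNM : N = M := by simpa using hl.symm
          rw [List.append_nil, hNM]
          exact hlast1
        | cons h' t' =>
          have h6 : (h' :: t').getLast? = some N := by
            rwa [List.getLast?_cons_cons] at hl
          rw [List.getLast?_append, h6]; rfl
      · intro P hP
        rcases List.mem_append.mp hP with h | h
        · exact hc1.2.2.1 P h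
        · exact hs P (List.mem_cons_of_mem M h)
      · rw [List.Chain', List.isChain_append]
        refine ⟨hc1.2.2.2, (List.isChain_cons.mp hcc).2, ?_⟩
        intro x hx y hy
        have hxM : M = x := by rw [hlast1] at hx; simpa using hx
        subst hxM
        exact (List.isChain_cons.mp hcc).1 y hy
    rw [hRM M c1 hM hc1, hRM N (c1 ++ t) hN hchainTo]
    rintro r ⟨i, X, Y, g1, g2, g3⟩
    have hi2 : i + 1 < c1.length := (List.getElem?_eq_some_iff.mp g2).1
    have hi1 : i < c1.length := Nat.lt_of_succ_lt hi2
    exact ⟨i, X, Y, by rw [List.getElem?_append_left hi1]; exact g1,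
      by rw [List.getElem?_append_left hi2]; exact g2, g3⟩

lemma RM_subset_RotSet {M0 : Matching I}
    (hM0 : Stable I M0 ∧ ∀ N, Stable I N → matGE I M0 N)
    {RM : Matching I → Set (Rot A B)}
    (hRM : ∀ M c, Stable I M → chainTo I M0 M c → RM M = chainRots I c)
    {M : Matching I} (hM : Stable I M) : RM M ⊆ RotSet I := by
  obtain ⟨c, hc⟩ := exists_chainTo hM0 hM
  rw [hRM M c hM hc]
  rintro r ⟨i, X, Y, h1, h2, rfl⟩
  exact ⟨X, Y, chain'_rel_of_get hc.2.2.2 h1 h2, rfl⟩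

lemma upperClosed_RM {M0 : Matching I}
    (hM0 : Stable I M0 ∧ ∀ N, Stable I N → matGE I M0 N)
    {RM : Matching I → Set (Rot A B)}
    (hRM : ∀ M c, Stable I M → chainTo I M0 M c → RM M = chainRots I c)
    {M : Matching I} (hM : Stable I M) : UpperClosed I RM (RM M) := by
  refine ⟨RM_subset_RotSet hM0 hRM hM, ?_⟩
  intro r' hr' r hrR hdom
  rcases hdom with rfl | hdom
  · exact hr'
  obtain ⟨c, hc⟩ := exists_chainTo hM0 hM
  rw [hRM M c hM hc] at hr' ⊢
  obtain ⟨i, X, Y, h1, h2, h3⟩ := hr'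
  have hXst : Stable I X := hc.2.2.1 X (List.mem_of_getElem? h1)
  have hImm : ImmPred I Y X := chain'_rel_of_get hc.2.2.2 h1 h2
  have hrX : r ∈ RM X := hdom X hXst ⟨Y, hImm, h3⟩
  have hi1 : i < c.length := (List.getElem?_eq_some_iff.mp h1).1
  have hlen : (c.take (i + 1)).length = i + 1 := by
    rw [List.length_take]
    exact Nat.min_eq_left (Nat.succ_le_of_lt hi1)
  have hct : chainTo I M0 X (c.take (i + 1)) := by
    refine ⟨?_, ?_, ?_, ?_⟩
    · rw [List.head?_eq_getElem?, List.getElem?_take_of_lt (Nat.succ_pos i), ← List.head?_eq_getElem?]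
      exact hc.1
    · rw [List.getLast?_eq_getElem?, hlen]
      simpa [List.getElem?_take_of_lt (Nat.lt_succ_self i)] using h1
    · intro P hP
      exact hc.2.2.1 P (List.mem_of_mem_take hP)
    · exact hc.2.2.2.prefix (List.take_prefix _ _)
  rw [hRM X _ hXst hct] at hrX
  obtain ⟨j, P, Q, g1, g2, g3⟩ := hrX
  have hj2 : j + 1 < (c.take (i + 1)).length := (List.getElem?_eq_some_iff.mp g2).1
  have hj2' : j + 1 < i + 1 := by rwa [hlen] at hj2
  refine ⟨j, P, Q, ?_, ?_, g3⟩
  · rw [← List.getElem?_take_of_lt (Nat.lt_of_succ_lt hj2')]; exact g1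
  · rw [← List.getElem?_take_of_lt hj2']; exact g2

end Aux

section Cut

lemma cutVal_submodular (u : Vtx A B → Vtx A B → ℝ≥0∞) (S T : Set (Vtx A B)) :
    cutVal u (S ∪ T) + cutVal u (S ∩ T) ≤ cutVal u S + cutVal u T := by
  unfold cutVal
  rw [← Finset.sum_add_distrib, ← Finset.sum_add_distrib]
  apply Finset.sum_le_sum
  intro p _
  by_cases h1 : p.1 ∈ S <;> by_cases h2 : p.1 ∈ T <;>
    by_cases h3 : p.2 ∈ S <;> by_cases h4 : p.2 ∈ T <;>
    simp [Set.mem_union, Set.mem_inter_iff, h1, h2, h3, h4, le_refl, zero_le,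
      le_add_iff_nonneg_left, le_add_iff_nonneg_right]

lemma cutOf_union (R R' : Set (Rot A B)) :
    cutOf (R ∪ R') = (cutOf R ∪ cutOf R' : Set (Vtx A B)) := by
  unfold cutOf
  rw [Set.image_union, Set.insert_union_distrib]

lemma cutOf_inter (R R' : Set (Rot A B)) :
    cutOf (R ∩ R') = (cutOf R ∩ cutOf R' : Set (Vtx A B)) := by
  unfold cutOf
  rw [Set.image_inter Sum.inl_injective, Set.insert_inter_distrib]

end Cut

/-- the minimizers of a minimum cut representable problem form a
sublattice of the lattice of stable matchings. -/
theorem stmt11 (I : SchoolInstance A B) (M0 : Matching I)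
    (hM0 : Stable I M0 ∧ ∀ N, Stable I N → matGE I M0 N)
    (RM : Matching I → Set (Rot A B))
    (hRM : ∀ M c, Stable I M → chainTo I M0 M c → RM M = chainRots I c)
    (F : Set (Matching I)) (hFne : F.Nonempty) (hFS : ∀ M ∈ F, Stable I M)
    (f : Matching I → ℝ) (hMC : MinCutRep I RM F f) :
    (∃ M ∈ F, ∀ M' ∈ F, f M ≤ f M') ∧
    (∀ M M' : Matching I, M ∈ F → M' ∈ F →
      (∀ P ∈ F, f M ≤ f P) → (∀ P ∈ F, f M' ≤ f P) →
      (∀ N, IsMeet I M M' N → N ∈ F ∧ ∀ P ∈ F, f N ≤ f P) ∧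
      (∀ N, IsJoin I M M' N → N ∈ F ∧ ∀ P ∈ F, f N ≤ f P)) := by
  obtain ⟨u, C, hu⟩ := hMC
  refine ⟨Set.exists_min_image F f (Set.toFinite F) hFne, ?_⟩
  intro M M' hMF hM'F hMmin hM'min
  have hMst : Stable I M := hFS M hMF
  have hM'st : Stable I M' := hFS M' hM'F
  set R := RM M with hRdef
  set R' := RM M' with hR'def
  have hRsub : R ⊆ RotSet I := RM_subset_RotSet hM0 hRM hMst
  have hR'sub : R' ⊆ RotSet I := RM_subset_RotSet hM0 hRM hM'st
  have hfinR : cutVal u (cutOf R) ≠ ⊤ :=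
    (hu R hRsub).1.mpr ⟨upperClosed_RM hM0 hRM hMst, M, hMst, rfl, hMF⟩
  have hfinR' : cutVal u (cutOf R') ≠ ⊤ :=
    (hu R' hR'sub).1.mpr ⟨upperClosed_RM hM0 hRM hM'st, M', hM'st, rfl, hM'F⟩
  have hvalR : (cutVal u (cutOf R)).toReal = f M + C := (hu R hRsub).2 M hMst rfl hMF
  have hvalR' : (cutVal u (cutOf R')).toReal = f M' + C := (hu R' hR'sub).2 M' hM'st rfl hM'F
  have hsubm := cutVal_submodular u (cutOf R) (cutOf R')
  rw [← cutOf_union, ← cutOf_inter] at hsubm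
  have hRRfin : cutVal u (cutOf R) + cutVal u (cutOf R') ≠ ⊤ :=
    ENNReal.add_ne_top.mpr ⟨hfinR, hfinR'⟩
  have hUfin : cutVal u (cutOf (R ∪ R')) ≠ ⊤ := by
    intro h
    rw [h] at hsubm
    exact hRRfin (top_le_iff.mp (le_trans (by simp) hsubm))
  have hIfin : cutVal u (cutOf (R ∩ R')) ≠ ⊤ := by
    intro h
    rw [h] at hsubm
    exact hRRfin (top_le_iff.mp (le_trans (by simp) hsubm))
  have hUsub : R ∪ R' ⊆ RotSet I := Set.union_subset hRsub hR'sub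
  have hIsub : R ∩ R' ⊆ RotSet I := Set.Subset.trans Set.inter_subset_left hRsub
  obtain ⟨_, Mu, hMust, hMuR, hMuF⟩ := (hu (R ∪ R') hUsub).1.mp hUfin
  obtain ⟨_, Md, hMdst, hMdR, hMdF⟩ := (hu (R ∩ R') hIsub).1.mp hIfin
  have hvalU : (cutVal u (cutOf (R ∪ R'))).toReal = f Mu + C :=
    (hu (R ∪ R') hUsub).2 Mu hMust hMuR hMuF
  have hvalI : (cutVal u (cutOf (R ∩ R'))).toReal = f Md + C :=
    (hu (R ∩ R') hIsub).2 Md hMdst hMdR hMdF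
  have hineq : f Mu + C + (f Md + C) ≤ f M + C + (f M' + C) := by
    have h1 : (cutVal u (cutOf (R ∪ R')) + cutVal u (cutOf (R ∩ R'))).toReal ≤
        (cutVal u (cutOf R) + cutVal u (cutOf R')).toReal :=
      ENNReal.toReal_mono hRRfin hsubm
    rwa [ENNReal.toReal_add hUfin hIfin, ENNReal.toReal_add hfinR hfinR',
      hvalU, hvalI, hvalR, hvalR'] at h1
  have hfMu : ∀ P ∈ F, f Mu ≤ f P := by
    intro P hP
    have h1 := hM'min Md hMdF
    have h2 := hMmin P hP
    linarith
  have hfMd : ∀ P ∈ F, f Md ≤ f P := by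
    intro P hP
    have h1 := hMmin Mu hMuF
    have h2 := hM'min P hP
    linarith
  constructor
  · intro N hN
    have hNst : Stable I N := hN.1
    have hMu_le_M : matGE I M Mu :=
      matGE_of_RM_subset hM0 hRM hMst hMust (by rw [hMuR]; exact Set.subset_union_left)
    have hMu_le_M' : matGE I M' Mu :=
      matGE_of_RM_subset hM0 hRM hM'st hMust (by rw [hMuR]; exact Set.subset_union_right)
    have h1 : matGE I Mu N :=
      matGE_of_RM_subset hM0 hRM hMust hNst (by
        rw [hMuR]
        exact Set.union_subset (RM_mono hM0 hRM hMst hNst hN.2.1)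
          (RM_mono hM0 hRM hM'st hNst hN.2.2.1))
    have h2 : matGE I N Mu := hN.2.2.2 Mu hMust hMu_le_M hMu_le_M'
    have hNMu : N = Mu := Matching.ext' (matGE_antisymm h2 h1)
    rw [hNMu]
    exact ⟨hMuF, hfMu⟩
  · intro N hN
    have hNst : Stable I N := hN.1
    have hMd_ge_M : matGE I Md M :=
      matGE_of_RM_subset hM0 hRM hMdst hMst (by rw [hMdR]; exact Set.inter_subset_left)
    have hMd_ge_M' : matGE I Md M' :=
      matGE_of_RM_subset hM0 hRM hMdst hM'st (by rw [hMdR]; exact Set.inter_subset_right)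
    have h1 : matGE I N Md :=
      matGE_of_RM_subset hM0 hRM hNst hMdst (by
        rw [hMdR]
        exact Set.subset_inter (RM_mono hM0 hRM hNst hMst hN.2.1)
          (RM_mono hM0 hRM hNst hM'st hN.2.2.1))
    have h2 : matGE I Md N := hN.2.2.2 Md hMdst hMd_ge_M hMd_ge_M'
    have hNMd : N = Md := Matching.ext' (matGE_antisymm h1 h2)
    rw [hNMd]
    exact ⟨hMdF, hfMd⟩

end SM
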